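/- Let G₁ and G₂ be two simple directed graphs realizing the same bi-degree sequence with e total edges. Then G₁ can be transformed into G₂ by a sequence of at most 2e two-edge or three-edge swaps, through realizations of the same bi-degree sequence. -/

import Mathlib

set_option maxHeartbeats 1000000


/-- Out-degree of `v` in the digraph with (boolean) adjacency `E`. -/
def outDeg {n : ℕ} (E : Fin n → Fin n → Bool) (v : Fin n) : ℕ :=
  (Finset.univ.filter (fun w => E v w = true)).card

/-- In-degree of `v` in the digraph with (boolean) adjacency `E`. -/
def inDeg {n : ℕ} (E : Fin n → Fin n → Bool) (v : Fin n) : ℕ :=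
  (Finset.univ.filter (fun w => E w v = true)).card

/-- `E` is a simple directed graph (no loops; at most one edge in each
direction) realizing the bi-degree sequence `(dp, dm)`. -/
def Realizes {n : ℕ} (E : Fin n → Fin n → Bool) (dp dm : Fin n → ℕ) : Prop :=
  (∀ v, E v v = false) ∧ ∀ v, outDeg E v = dp v ∧ inDeg E v = dm v

/-- A bi-degree sequence is bi-graphical if some simple digraph realizes it. -/
def BiGraphical (n : ℕ) (dp dm : Fin n → ℕ) : Prop :=
  ∃ E : Fin n → Fin n → Bool, Realizes E dp dm

/-- A two-edge swap: the edges `a→b`, `c→d` (present) are replaced by `a→d`,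
`c→b` (previously absent, non-loops). -/
def TwoSwap {n : ℕ} (E E' : Fin n → Fin n → Bool) : Prop :=
  ∃ a b c d : Fin n,
    a ≠ b ∧ c ≠ d ∧ a ≠ d ∧ c ≠ b ∧
    E a b = true ∧ E c d = true ∧ E a d = false ∧ E c b = false ∧
    ∀ x y, E' x y =
      (if (x = a ∧ y = b) ∨ (x = c ∧ y = d) then false
       else if (x = a ∧ y = d) ∨ (x = c ∧ y = b) then true
       else E x y)

/-- A three-edge swap: the directed triangle `a→b→c→a` is reversed
(its reversal being previously absent). -/
def ThreeSwap {n : ℕ} (E E' : Fin n → Fin n → Bool) : Prop :=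
  ∃ a b c : Fin n,
    a ≠ b ∧ b ≠ c ∧ a ≠ c ∧
    E a b = true ∧ E b c = true ∧ E c a = true ∧
    E b a = false ∧ E c b = false ∧ E a c = false ∧
    ∀ x y, E' x y =
      (if (x = a ∧ y = b) ∨ (x = b ∧ y = c) ∨ (x = c ∧ y = a) then false
       else if (x = b ∧ y = a) ∨ (x = c ∧ y = b) ∨ (x = a ∧ y = c) then true
       else E x y)

/-- A swap is a two-edge swap or a three-edge swap. -/
def Swap {n : ℕ} (E E' : Fin n → Fin n → Bool) : Prop :=
  TwoSwap E E' ∨ ThreeSwap E E'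

namespace SwapProof

variable {n : ℕ}

abbrev G (n : ℕ) := Fin n → Fin n → Bool

def mism (A B : G n) : Finset (Fin n × Fin n) :=
  Finset.univ.filter (fun p => A p.1 p.2 ≠ B p.1 p.2)

lemma mem_mism {A B : G n} {p : Fin n × Fin n} :
    p ∈ mism A B ↔ A p.1 p.2 ≠ B p.1 p.2 := by simp [mism]

def Dd (A B : G n) : ℕ := (mism A B).card

lemma Dd_comm (A B : G n) : Dd A B = Dd B A := by
  unfold Dd mism
  congr 1
  ext p
  simp [ne_comm]

lemma ne_of_edge {E : G n} {dp dm} (hE : Realizes E dp dm) {x y : Fin n}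
    (h : E x y = true) : x ≠ y := by
  rintro rfl
  rw [hE.1 x] at h
  exact absurd h (by simp)

lemma card_swap_one (p p' : Fin n → Bool) (u w : Fin n)
    (hu : p u = true) (hw : p w = false)
    (hu' : p' u = false) (hw' : p' w = true)
    (hsame : ∀ y, y ≠ u → y ≠ w → p' y = p y) :
    (Finset.univ.filter (fun y => p' y = true)).card
      = (Finset.univ.filter (fun y => p y = true)).card := by
  have huw : u ≠ w := by rintro rfl; rw [hu] at hw; exact absurd hw (by simp)
  have hset : Finset.univ.filter (fun y => p' y = true)
      = insert w ((Finset.univ.filter (fun y => p y = true)).erase u) := by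
    ext y
    simp only [Finset.mem_filter, Finset.mem_univ, true_and, Finset.mem_insert,
      Finset.mem_erase]
    by_cases hyu : y = u
    · subst hyu
      simp [hu', huw, hu]
    · by_cases hyw : y = w
      · subst hyw
        simp [hw']
      · simp [hsame y hyu hyw, hyu, hyw]
  rw [hset]
  have humem : u ∈ Finset.univ.filter (fun y => p y = true) := by simp [hu]
  have hwmem : w ∉ (Finset.univ.filter (fun y => p y = true)).erase u := by
    simp [hw]
  rw [Finset.card_insert_of_notMem hwmem, Finset.card_erase_of_mem humem]
  have : 0 < (Finset.univ.filter (fun y => p y = true)).card :=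
    Finset.card_pos.2 ⟨u, humem⟩
  omega

lemma count_le {A' A B : G n} {q p1 p2 p3 : Fin n × Fin n}
    (hsub : mism A' B ⊆ insert q (mism A B \ {p1, p2, p3}))
    (h1 : p1 ∈ mism A B) (h2 : p2 ∈ mism A B) (h3 : p3 ∈ mism A B)
    (d12 : p1 ≠ p2) (d13 : p1 ≠ p3) (d23 : p2 ≠ p3) :
    Dd A' B + 2 ≤ Dd A B := by
  have hT : ({p1, p2, p3} : Finset (Fin n × Fin n)) ⊆ mism A B := by
    intro x hx
    simp only [Finset.mem_insert, Finset.mem_singleton] at hx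
    rcases hx with rfl | rfl | rfl <;> assumption
  have hc3 : ({p1, p2, p3} : Finset (Fin n × Fin n)).card = 3 := by
    rw [Finset.card_insert_of_notMem (by simp [d12, d13]),
      Finset.card_insert_of_notMem (by simp [d23]), Finset.card_singleton]
  have hge : 3 ≤ (mism A B).card := by
    calc 3 = ({p1, p2, p3} : Finset (Fin n × Fin n)).card := hc3.symm
    _ ≤ (mism A B).card := Finset.card_le_card hT
  have : Dd A' B ≤ (mism A B \ {p1, p2, p3}).card + 1 := by
    calc Dd A' B ≤ (insert q (mism A B \ {p1, p2, p3})).card :=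
          Finset.card_le_card hsub
    _ ≤ (mism A B \ {p1, p2, p3}).card + 1 := Finset.card_insert_le _ _
  rw [Finset.card_sdiff_of_subset hT, hc3] at this
  unfold Dd at *
  omega


def tsFun (E : G n) (a b c d : Fin n) : G n := fun x y =>
  if (x = a ∧ y = b) ∨ (x = c ∧ y = d) then false
  else if (x = a ∧ y = d) ∨ (x = c ∧ y = b) then true
  else E x y

lemma realizes_tsFun {A : G n} {dp dm : Fin n → ℕ} (hA : Realizes A dp dm)
    (a b c d : Fin n)
    (h1 : A a b = true) (h2 : A c d = true) (h3 : A a d = false) (h4 : A c b = false)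
    (had : a ≠ d) (hcb : c ≠ b) :
    Realizes (tsFun A a b c d) dp dm := by
  have hac : a ≠ c := by rintro rfl; rw [h2] at h3; exact absurd h3 (by simp)
  have hbd : b ≠ d := by rintro rfl; rw [h1] at h3; exact absurd h3 (by simp)
  constructor
  · intro v
    show tsFun A a b c d v v = false
    unfold tsFun
    split_ifs with hc1 hc2
    · rfl
    · exfalso
      rcases hc2 with ⟨hv1, hv2⟩ | ⟨hv1, hv2⟩
      · subst hv1; exact had hv2
      · subst hv1; exact hcb hv2
    · exact hA.1 v
  · intro v
    constructor
    · rw [← (hA.2 v).1]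
      unfold outDeg
      by_cases hva : v = a
      · subst hva
        exact card_swap_one _ _ b d h1 h3
          (by simp [tsFun]) (by simp [tsFun, Ne.symm hbd, hac])
          (fun y hyb hyd => by simp [tsFun, hyb, hyd, hac])
      · by_cases hvc : v = c
        · subst hvc
          exact card_swap_one _ _ d b h2 h4
            (by simp [tsFun]) (by simp [tsFun, Ne.symm hac, hbd])
            (fun y hyd hyb => by simp [tsFun, hyb, hyd, Ne.symm hac])
        · have : ∀ y, tsFun A a b c d v y = A v y := by
            intro y; simp [tsFun, hva, hvc]
          simp only [this]
    · rw [← (hA.2 v).2]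
      unfold inDeg
      by_cases hvb : v = b
      · subst hvb
        exact card_swap_one _ _ a c h1 h4
          (by simp [tsFun]) (by simp [tsFun, Ne.symm hac, hbd])
          (fun x hxa hxc => by simp [tsFun, hxa, hxc])
      · by_cases hvd : v = d
        · subst hvd
          exact card_swap_one _ _ c a h2 h3
            (by simp [tsFun]) (by simp [tsFun, Ne.symm hbd, hac])
            (fun x hxc hxa => by simp [tsFun, hxa, hxc, Ne.symm hbd])
        · have : ∀ x, tsFun A a b c d x v = A x v := by
            intro x; simp [tsFun, hvb, hvd]
          simp only [this]

lemma master {A B : G n} {dp dm : Fin n → ℕ} (hA : Realizes A dp dm) (hB : Realizes B dp dm)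
    (a b c d : Fin n)
    (h1 : A a b = true) (h2 : A c d = true) (h3 : A a d = false) (h4 : A c b = false)
    (hcb : c ≠ b)
    (hB1 : B a b = false) (hB2 : B a d = true)
    (hV : B c d = false ∨ B c b = true) :
    ∃ A', Swap A A' ∧ Realizes A' dp dm ∧ Dd A' B + 2 ≤ Dd A B := by
  have hab : a ≠ b := ne_of_edge hA h1
  have hcd : c ≠ d := ne_of_edge hA h2
  have had : a ≠ d := ne_of_edge hB hB2
  have hac : a ≠ c := by rintro rfl; rw [h2] at h3; exact absurd h3 (by simp)
  have hbd : b ≠ d := by rintro rfl; rw [h1] at h3; exact absurd h3 (by simp)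
  refine ⟨tsFun A a b c d,
    Or.inl ⟨a, b, c, d, hab, hcd, had, hcb, h1, h2, h3, h4, fun _ _ => rfl⟩,
    realizes_tsFun hA a b c d h1 h2 h3 h4 had hcb, ?_⟩
  have evab : tsFun A a b c d a b = false := by simp [tsFun]
  have evad : tsFun A a b c d a d = true := by simp [tsFun, Ne.symm hbd, hac]
  have evcd : tsFun A a b c d c d = false := by simp [tsFun]
  have evcb : tsFun A a b c d c b = true := by simp [tsFun, Ne.symm hac, hbd]
  have evother : ∀ x y, ¬(x = a ∧ y = b) → ¬(x = c ∧ y = d) → ¬(x = a ∧ y = d) →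
      ¬(x = c ∧ y = b) → tsFun A a b c d x y = A x y := by
    intro x y n1 n2 n3 n4
    simp only [tsFun]
    rw [if_neg (by tauto), if_neg (by tauto)]
  have hmab : (a, b) ∈ mism A B := by rw [mem_mism]; simp [h1, hB1]
  have hmad : (a, d) ∈ mism A B := by rw [mem_mism]; simp [h3, hB2]
  rcases hV with h5 | h5
  · refine count_le (q := (c, b)) (p1 := (a, b)) (p2 := (a, d)) (p3 := (c, d))
      ?_ hmab hmad (by rw [mem_mism]; simp [h2, h5])
      (fun h => hbd (congrArg Prod.snd h)) (fun h => hac (congrArg Prod.fst h))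
      (fun h => hac (congrArg Prod.fst h))
    · rintro ⟨x, y⟩ hp
      rw [mem_mism] at hp
      by_cases e4 : x = c ∧ y = b
      · obtain ⟨rfl, rfl⟩ := e4
        exact Finset.mem_insert_self _ _
      · by_cases e1 : x = a ∧ y = b
        · obtain ⟨rfl, rfl⟩ := e1
          rw [evab, hB1] at hp; exact absurd rfl hp
        · by_cases e2 : x = c ∧ y = d
          · obtain ⟨rfl, rfl⟩ := e2
            rw [evcd, h5] at hp; exact absurd rfl hp
          · by_cases e3 : x = a ∧ y = d
            · obtain ⟨rfl, rfl⟩ := e3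
              rw [evad, hB2] at hp; exact absurd rfl hp
            · rw [evother x y e1 e2 e3 e4] at hp
              refine Finset.mem_insert.2 (Or.inr (Finset.mem_sdiff.2 ⟨mem_mism.2 hp, ?_⟩))
              simp only [Finset.mem_insert, Finset.mem_singleton, Prod.mk.injEq]
              tauto
  · refine count_le (q := (c, d)) (p1 := (a, b)) (p2 := (a, d)) (p3 := (c, b))
      ?_ hmab hmad (by rw [mem_mism]; simp [h4, h5])
      (fun h => hbd (congrArg Prod.snd h)) (fun h => hac (congrArg Prod.fst h))
      (fun h => hac (congrArg Prod.fst h))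
    · rintro ⟨x, y⟩ hp
      rw [mem_mism] at hp
      by_cases e2 : x = c ∧ y = d
      · obtain ⟨rfl, rfl⟩ := e2
        exact Finset.mem_insert_self _ _
      · by_cases e1 : x = a ∧ y = b
        · obtain ⟨rfl, rfl⟩ := e1
          rw [evab, hB1] at hp; exact absurd rfl hp
        · by_cases e4 : x = c ∧ y = b
          · obtain ⟨rfl, rfl⟩ := e4
            rw [evcb, h5] at hp; exact absurd rfl hp
          · by_cases e3 : x = a ∧ y = d
            · obtain ⟨rfl, rfl⟩ := e3
              rw [evad, hB2] at hp; exact absurd rfl hp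
            · rw [evother x y e1 e2 e3 e4] at hp
              refine Finset.mem_insert.2 (Or.inr (Finset.mem_sdiff.2 ⟨mem_mism.2 hp, ?_⟩))
              simp only [Finset.mem_insert, Finset.mem_singleton, Prod.mk.injEq]
              tauto


def ts3Fun (E : G n) (a b c : Fin n) : G n := fun x y =>
  if (x = a ∧ y = b) ∨ (x = b ∧ y = c) ∨ (x = c ∧ y = a) then false
  else if (x = b ∧ y = a) ∨ (x = c ∧ y = b) ∨ (x = a ∧ y = c) then true
  else E x y

lemma realizes_ts3Fun {A : G n} {dp dm : Fin n → ℕ} (hA : Realizes A dp dm)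
    (v0 v1 v2 : Fin n)
    (e01 : A v0 v1 = true) (e12 : A v1 v2 = true) (e20 : A v2 v0 = true)
    (r10 : A v1 v0 = false) (r21 : A v2 v1 = false) (r02 : A v0 v2 = false) :
    Realizes (ts3Fun A v0 v1 v2) dp dm := by
  have d01 : v0 ≠ v1 := ne_of_edge hA e01
  have d12 : v1 ≠ v2 := ne_of_edge hA e12
  have d20 : v2 ≠ v0 := ne_of_edge hA e20
  constructor
  · intro v
    show ts3Fun A v0 v1 v2 v v = false
    unfold ts3Fun
    split_ifs with hc1 hc2
    · rfl
    · exfalso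
      rcases hc2 with ⟨h1', h2'⟩ | ⟨h1', h2'⟩ | ⟨h1', h2'⟩
      · exact (Ne.symm d01) (h1'.symm.trans h2')
      · exact (Ne.symm d12) (h1'.symm.trans h2')
      · exact (Ne.symm d20) (h1'.symm.trans h2')
    · exact hA.1 v
  · intro v
    constructor
    · rw [← (hA.2 v).1]
      unfold outDeg
      by_cases h0 : v = v0
      · subst h0
        exact card_swap_one _ _ v1 v2 e01 r02
          (by simp [ts3Fun]) (by simp [ts3Fun, d01, Ne.symm d12, Ne.symm d20])
          (fun y hy1 hy2 => by simp [ts3Fun, hy1, hy2, d01, Ne.symm d20])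
      · by_cases h1 : v = v1
        · subst h1
          exact card_swap_one _ _ v2 v0 e12 r10
            (by simp [ts3Fun]) (by simp [ts3Fun, Ne.symm d01, Ne.symm d20, d12])
            (fun y hy2 hy0 => by simp [ts3Fun, hy2, hy0, Ne.symm d01, d12])
        · by_cases h2 : v = v2
          · subst h2
            exact card_swap_one _ _ v0 v1 e20 r21
              (by simp [ts3Fun]) (by simp [ts3Fun, d20, Ne.symm d12, Ne.symm d01])
              (fun y hy0 hy1 => by simp [ts3Fun, hy0, hy1, d20, Ne.symm d12])
          · have : ∀ y, ts3Fun A v0 v1 v2 v y = A v y := by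
              intro y; simp [ts3Fun, h0, h1, h2]
            simp only [this]
    · rw [← (hA.2 v).2]
      unfold inDeg
      by_cases h0 : v = v0
      · subst h0
        exact card_swap_one _ _ v2 v1 e20 r10
          (by simp [ts3Fun]) (by simp [ts3Fun, Ne.symm d01, Ne.symm d20, d12])
          (fun x hx2 hx1 => by simp [ts3Fun, hx1, hx2, d01, Ne.symm d20])
      · by_cases h1 : v = v1
        · subst h1
          exact card_swap_one _ _ v0 v2 e01 r21
            (by simp [ts3Fun]) (by simp [ts3Fun, d20, Ne.symm d12, Ne.symm d01])
            (fun x hx0 hx2 => by simp [ts3Fun, hx0, hx2, d12, Ne.symm d01])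
        · by_cases h2 : v = v2
          · subst h2
            exact card_swap_one _ _ v1 v0 e12 r02
              (by simp [ts3Fun]) (by simp [ts3Fun, d01, Ne.symm d12, Ne.symm d20])
              (fun x hx1 hx0 => by simp [ts3Fun, hx0, hx1, d20, Ne.symm d12])
          · have : ∀ x, ts3Fun A v0 v1 v2 x v = A x v := by
              intro x; simp [ts3Fun, h0, h1, h2]
            simp only [this]

lemma master3 {A B : G n} {dp dm : Fin n → ℕ} (hA : Realizes A dp dm)
    (v0 v1 v2 : Fin n)
    (e01 : A v0 v1 = true) (e12 : A v1 v2 = true) (e20 : A v2 v0 = true)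
    (r10 : A v1 v0 = false) (r21 : A v2 v1 = false) (r02 : A v0 v2 = false)
    (Bf01 : B v0 v1 = false) (Bf12 : B v1 v2 = false) (Bf20 : B v2 v0 = false)
    (Bt10 : B v1 v0 = true) (Bt21 : B v2 v1 = true) (Bt02 : B v0 v2 = true) :
    ∃ A', Swap A A' ∧ Realizes A' dp dm ∧ Dd A' B + 2 ≤ Dd A B := by
  have d01 : v0 ≠ v1 := ne_of_edge hA e01
  have d12 : v1 ≠ v2 := ne_of_edge hA e12
  have d20 : v2 ≠ v0 := ne_of_edge hA e20
  refine ⟨ts3Fun A v0 v1 v2,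
    Or.inr ⟨v0, v1, v2, d01, d12, Ne.symm d20, e01, e12, e20, r10, r21, r02,
      fun _ _ => rfl⟩,
    realizes_ts3Fun hA v0 v1 v2 e01 e12 e20 r10 r21 r02, ?_⟩
  have ev01 : ts3Fun A v0 v1 v2 v0 v1 = false := by simp [ts3Fun]
  have ev12 : ts3Fun A v0 v1 v2 v1 v2 = false := by simp [ts3Fun]
  have ev20 : ts3Fun A v0 v1 v2 v2 v0 = false := by simp [ts3Fun]
  have ev10 : ts3Fun A v0 v1 v2 v1 v0 = true := by
    simp [ts3Fun, Ne.symm d01, Ne.symm d20, d12]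
  have ev21 : ts3Fun A v0 v1 v2 v2 v1 = true := by
    simp [ts3Fun, d20, Ne.symm d12, Ne.symm d01]
  have ev02 : ts3Fun A v0 v1 v2 v0 v2 = true := by
    simp [ts3Fun, d01, Ne.symm d12, Ne.symm d20]
  have evother : ∀ x y, ¬(x = v0 ∧ y = v1) → ¬(x = v1 ∧ y = v2) → ¬(x = v2 ∧ y = v0) →
      ¬(x = v1 ∧ y = v0) → ¬(x = v2 ∧ y = v1) → ¬(x = v0 ∧ y = v2) →
      ts3Fun A v0 v1 v2 x y = A x y := by
    intro x y n1 n2 n3 n4 n5 n6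
    simp only [ts3Fun]
    rw [if_neg (by tauto), if_neg (by tauto)]
  refine count_le (q := (v0, v1)) (p1 := (v0, v1)) (p2 := (v1, v2)) (p3 := (v2, v0))
    ?_ (by rw [mem_mism]; simp [e01, Bf01]) (by rw [mem_mism]; simp [e12, Bf12])
    (by rw [mem_mism]; simp [e20, Bf20])
    (fun h => d01 (congrArg Prod.fst h))
    (fun h => (Ne.symm d20) (congrArg Prod.fst h))
    (fun h => d12 (congrArg Prod.fst h))
  rintro ⟨x, y⟩ hp
  rw [mem_mism] at hp
  by_cases e1 : x = v0 ∧ y = v1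
  · obtain ⟨rfl, rfl⟩ := e1; rw [ev01, Bf01] at hp; exact absurd rfl hp
  by_cases e2 : x = v1 ∧ y = v2
  · obtain ⟨rfl, rfl⟩ := e2; rw [ev12, Bf12] at hp; exact absurd rfl hp
  by_cases e3 : x = v2 ∧ y = v0
  · obtain ⟨rfl, rfl⟩ := e3; rw [ev20, Bf20] at hp; exact absurd rfl hp
  by_cases e4 : x = v1 ∧ y = v0
  · obtain ⟨rfl, rfl⟩ := e4; rw [ev10, Bt10] at hp; exact absurd rfl hp
  by_cases e5 : x = v2 ∧ y = v1
  · obtain ⟨rfl, rfl⟩ := e5; rw [ev21, Bt21] at hp; exact absurd rfl hp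
  by_cases e6 : x = v0 ∧ y = v2
  · obtain ⟨rfl, rfl⟩ := e6; rw [ev02, Bt02] at hp; exact absurd rfl hp
  rw [evother x y e1 e2 e3 e4 e5 e6] at hp
  refine Finset.mem_insert.2 (Or.inr (Finset.mem_sdiff.2 ⟨mem_mism.2 hp, ?_⟩))
  simp only [Finset.mem_insert, Finset.mem_singleton, Prod.mk.injEq]
  tauto


lemma bool_false {x : Bool} (h : ¬ x = true) : x = false := by
  cases x
  · rfl
  · exact absurd rfl h

lemma twoswap_symm {E E' : G n} (h : TwoSwap E E') : TwoSwap E' E := by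
  obtain ⟨a, b, c, d, hab, hcd, had, hcb, h1, h2, h3, h4, hf⟩ := h
  have hac : a ≠ c := by rintro rfl; rw [h2] at h3; exact absurd h3 (by simp)
  have hbd : b ≠ d := by rintro rfl; rw [h1] at h3; exact absurd h3 (by simp)
  have evab : E' a b = false := by rw [hf]; simp
  have evcd : E' c d = false := by rw [hf]; simp
  have evad : E' a d = true := by rw [hf]; simp [Ne.symm hbd, hac]
  have evcb : E' c b = true := by rw [hf]; simp [Ne.symm hac, hbd]
  refine ⟨a, d, c, b, had, hcb, hab, hcd, evad, evcb, evab, evcd, ?_⟩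
  intro x y
  rw [hf x y]
  by_cases e1 : x = a ∧ y = b
  · obtain ⟨rfl, rfl⟩ := e1
    simp [h1, hac, hbd, Ne.symm hac, Ne.symm hbd]
  by_cases e2 : x = c ∧ y = d
  · obtain ⟨rfl, rfl⟩ := e2
    simp [h2, hac, hbd, Ne.symm hac, Ne.symm hbd]
  by_cases e3 : x = a ∧ y = d
  · obtain ⟨rfl, rfl⟩ := e3
    simp [h3, hac, hbd, Ne.symm hac, Ne.symm hbd]
  by_cases e4 : x = c ∧ y = b
  · obtain ⟨rfl, rfl⟩ := e4
    simp [h4, hac, hbd, Ne.symm hac, Ne.symm hbd]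
  have n1 : ¬((x = a ∧ y = b) ∨ (x = c ∧ y = d)) := by tauto
  have n2 : ¬((x = a ∧ y = d) ∨ (x = c ∧ y = b)) := by tauto
  simp [n1, n2]

lemma threeswap_symm {E E' : G n} (h : ThreeSwap E E') : ThreeSwap E' E := by
  obtain ⟨a, b, c, hab, hbc, hac, h1, h2, h3, h4, h5, h6, hf⟩ := h
  have evab : E' a b = false := by rw [hf]; simp
  have evbc : E' b c = false := by rw [hf]; simp
  have evca : E' c a = false := by rw [hf]; simp
  have evba : E' b a = true := by
    rw [hf]; simp [hab, hbc, hac, Ne.symm hab, Ne.symm hbc, Ne.symm hac]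
  have evcb : E' c b = true := by
    rw [hf]; simp [hab, hbc, hac, Ne.symm hab, Ne.symm hbc, Ne.symm hac]
  have evac : E' a c = true := by
    rw [hf]; simp [hab, hbc, hac, Ne.symm hab, Ne.symm hbc, Ne.symm hac]
  refine ⟨a, c, b, hac, Ne.symm hbc, hab, evac, evcb, evba, evca, evbc, evab, ?_⟩
  intro x y
  rw [hf x y]
  by_cases e1 : x = a ∧ y = b
  · obtain ⟨rfl, rfl⟩ := e1
    simp [h1, hab, hbc, hac, Ne.symm hab, Ne.symm hbc, Ne.symm hac]
  by_cases e2 : x = b ∧ y = c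
  · obtain ⟨rfl, rfl⟩ := e2
    simp [h2, hab, hbc, hac, Ne.symm hab, Ne.symm hbc, Ne.symm hac]
  by_cases e3 : x = c ∧ y = a
  · obtain ⟨rfl, rfl⟩ := e3
    simp [h3, hab, hbc, hac, Ne.symm hab, Ne.symm hbc, Ne.symm hac]
  by_cases e4 : x = b ∧ y = a
  · obtain ⟨rfl, rfl⟩ := e4
    simp [h4, hab, hbc, hac, Ne.symm hab, Ne.symm hbc, Ne.symm hac]
  by_cases e5 : x = c ∧ y = b
  · obtain ⟨rfl, rfl⟩ := e5
    simp [h5, hab, hbc, hac, Ne.symm hab, Ne.symm hbc, Ne.symm hac]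
  by_cases e6 : x = a ∧ y = c
  · obtain ⟨rfl, rfl⟩ := e6
    simp [h6, hab, hbc, hac, Ne.symm hab, Ne.symm hbc, Ne.symm hac]
  have n1 : ¬((x = a ∧ y = b) ∨ (x = b ∧ y = c) ∨ (x = c ∧ y = a)) := by tauto
  have n2 : ¬((x = b ∧ y = a) ∨ (x = c ∧ y = b) ∨ (x = a ∧ y = c)) := by tauto
  have n3 : ¬((x = a ∧ y = c) ∨ (x = c ∧ y = b) ∨ (x = b ∧ y = a)) := by tauto
  have n4 : ¬((x = c ∧ y = a) ∨ (x = b ∧ y = c) ∨ (x = a ∧ y = b)) := by tauto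
  simp [n1, n2, n3, n4]

lemma swap_symm {E E' : G n} (h : Swap E E') : Swap E' E := by
  rcases h with h | h
  · exact Or.inl (twoswap_symm h)
  · exact Or.inr (threeswap_symm h)

def IsCyc (A B : G n) (k : ℕ) (a b : ℕ → Fin n) : Prop :=
  (∀ t, a (t + k) = a t) ∧ (∀ t, b (t + k) = b t) ∧
  (∀ t, A (a t) (b t) = true ∧ B (a t) (b t) = false) ∧
  (∀ t, A (a t) (b (t + 1)) = false ∧ B (a t) (b (t + 1)) = true)

lemma cyc_step {A B : G n} {dp dm : Fin n → ℕ}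
    (hA : Realizes A dp dm) (hB : Realizes B dp dm) :
    ∀ k, 2 ≤ k → ∀ a b, IsCyc A B k a b →
      (∃ A', Swap A A' ∧ Realizes A' dp dm ∧ Dd A' B + 2 ≤ Dd A B) ∨
      (∃ B', Swap B B' ∧ Realizes B' dp dm ∧ Dd A B' + 2 ≤ Dd A B) := by
  intro k
  induction k using Nat.strong_induction_on with
  | _ k ih =>
  intro hk a b hc
  obtain ⟨pa, pb, hp, hm⟩ := hc
  rcases eq_or_lt_of_le hk with hk2 | hk3
  · -- k = 2 : corner swap, all four cells fixed
    left
    have hb2 : b 2 = b 0 := by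
      have h := pb 0
      rw [← hk2] at h
      simpa using h
    have h4 : A (a 1) (b 0) = false := by
      have h : A (a 1) (b 2) = false := by simpa using (hm 1).1
      rwa [hb2] at h
    have h4B : B (a 1) (b 0) = true := by
      have h : B (a 1) (b 2) = true := by simpa using (hm 1).2
      rwa [hb2] at h
    exact master hA hB (a 0) (b 0) (a 1) (b 1)
      (hp 0).1 (hp 1).1 (hm 0).1 h4
      (ne_of_edge hB h4B)
      (hp 0).2 (hm 0).2 (Or.inl (hp 1).2)
  · -- k ≥ 3
    by_cases hX1 : ∃ i, A (a (i + 1)) (b i) = true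
    · obtain ⟨i, hXA⟩ := hX1
      by_cases hXB : B (a (i + 1)) (b i) = true
      · -- X both-1 : single B-side swap
        right
        obtain ⟨B', hsw, hre, hdd⟩ :=
          master (A := B) (B := A) hB hA (a i) (b (i + 1)) (a (i + 1)) (b i)
            (hm i).2 hXB (hp i).2 (hp (i + 1)).2
            (ne_of_edge hA (hp (i + 1)).1)
            (hm i).1 (hp i).1 (Or.inr (hp (i + 1)).1)
        exact ⟨B', hsw, hre, by rw [Dd_comm A B', Dd_comm A B]; exact hdd⟩
      · -- X is a plus chord : shorten the cycle to k - 1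
        have hXBf : B (a (i + 1)) (b i) = false := bool_false hXB
        refine ih (k - 1) (by omega) (by omega)
          (fun t => a (i + 1 + t % (k - 1)))
          (fun t => if t % (k - 1) = 0 then b i else b (i + 1 + t % (k - 1)))
          ⟨fun t => by simp only [Nat.add_mod_right], fun t => by simp only [Nat.add_mod_right], ?_, ?_⟩
        · intro t
          by_cases hm0 : t % (k - 1) = 0
          · simpa [hm0] using And.intro hXA hXBf
          · simpa [hm0] using hp (i + 1 + t % (k - 1))
        · intro t
          have hlt : t % (k - 1) < k - 1 := Nat.mod_lt _ (by omega)
          have hadd : (t + 1) % (k - 1) = (t % (k - 1) + 1) % (k - 1) := by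
            rw [Nat.add_mod, Nat.mod_eq_of_lt (show 1 < k - 1 by omega)]
          by_cases hend : t % (k - 1) + 1 < k - 1
          · have h1 : (t + 1) % (k - 1) = t % (k - 1) + 1 := by
              rw [hadd, Nat.mod_eq_of_lt hend]
            have := hm (i + 1 + t % (k - 1))
            simpa [h1, Nat.add_assoc] using this
          · have heq : t % (k - 1) + 1 = k - 1 := by omega
            have h1 : (t + 1) % (k - 1) = 0 := by
              rw [hadd, heq, Nat.mod_self]
            have hcell := hm (i + 1 + t % (k - 1))
            have hidx : i + 1 + t % (k - 1) + 1 = i + k := by omega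
            rw [hidx, pb i] at hcell
            simpa [h1] using hcell
    · have hX1' : ∀ i, A (a (i + 1)) (b i) = false :=
        fun i => bool_false (not_exists.mp hX1 i)
      by_cases hY1 : ∃ i, A (a i) (b (i + 2)) = true
      · obtain ⟨i, hYA⟩ := hY1
        by_cases hYB : B (a i) (b (i + 2)) = true
        · -- Y both-1 : single A-side swap
          left
          exact master hA hB (a (i + 1)) (b (i + 1)) (a i) (b (i + 2))
            (hp (i + 1)).1 hYA (hm (i + 1)).1 (hm i).1
            (ne_of_edge hB (hm i).2)
            (hp (i + 1)).2 (hm (i + 1)).2 (Or.inr (hm i).2)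
        · -- Y is a plus chord : two-cycle
          have hYBf : B (a i) (b (i + 2)) = false := bool_false hYB
          refine ih 2 (by omega) (by omega)
            (fun t => if t % 2 = 0 then a i else a (i + 1))
            (fun t => if t % 2 = 0 then b (i + 2) else b (i + 1))
            ⟨fun t => by simp only [Nat.add_mod_right], fun t => by simp only [Nat.add_mod_right], ?_, ?_⟩
          · intro t
            by_cases h0 : t % 2 = 0
            · simpa [h0] using And.intro hYA hYBf
            · simpa [h0] using hp (i + 1)
          · intro t
            by_cases h0 : t % 2 = 0
            · have h1 : (t + 1) % 2 = 1 := by omega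
              simpa [h0, h1] using hm i
            · have h1 : (t + 1) % 2 = 0 := by omega
              simpa [h0, h1] using hm (i + 1)
      · have hY1' : ∀ i, A (a i) (b (i + 2)) = false :=
          fun i => bool_false (not_exists.mp hY1 i)
        by_cases hX2 : ∃ i, B (a (i + 1)) (b i) = true
        · -- X is a minus chord : two-cycle
          obtain ⟨i, hXB2⟩ := hX2
          refine ih 2 (by omega) (by omega)
            (fun t => if t % 2 = 0 then a i else a (i + 1))
            (fun t => if t % 2 = 0 then b i else b (i + 1))
            ⟨fun t => by simp only [Nat.add_mod_right], fun t => by simp only [Nat.add_mod_right], ?_, ?_⟩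
          · intro t
            by_cases h0 : t % 2 = 0
            · simpa [h0] using hp i
            · simpa [h0] using hp (i + 1)
          · intro t
            by_cases h0 : t % 2 = 0
            · have h1 : (t + 1) % 2 = 1 := by omega
              simpa [h0, h1] using hm i
            · have h1 : (t + 1) % 2 = 0 := by omega
              simpa [h0, h1] using And.intro (hX1' i) hXB2
        · have hX2' : ∀ i, B (a (i + 1)) (b i) = false :=
            fun i => bool_false (not_exists.mp hX2 i)
          by_cases hY2 : ∃ i, B (a i) (b (i + 2)) = true
          · -- Y is a minus chord : shorten the cycle to k - 1
            obtain ⟨i, hYB2⟩ := hY2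
            refine ih (k - 1) (by omega) (by omega)
              (fun t => if t % (k - 1) = 0 then a i else a (i + 1 + t % (k - 1)))
              (fun t => if t % (k - 1) = 0 then b i else b (i + 1 + t % (k - 1)))
              ⟨fun t => by simp only [Nat.add_mod_right], fun t => by simp only [Nat.add_mod_right], ?_, ?_⟩
            · intro t
              by_cases hm0 : t % (k - 1) = 0
              · simpa [hm0] using hp i
              · simpa [hm0] using hp (i + 1 + t % (k - 1))
            · intro t
              have hlt : t % (k - 1) < k - 1 := Nat.mod_lt _ (by omega)
              have hadd : (t + 1) % (k - 1) = (t % (k - 1) + 1) % (k - 1) := by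
                rw [Nat.add_mod, Nat.mod_eq_of_lt (show 1 < k - 1 by omega)]
              by_cases hm0 : t % (k - 1) = 0
              · have h1 : (t + 1) % (k - 1) = 1 := by
                  rw [hadd, hm0]
                  exact Nat.mod_eq_of_lt (by omega)
                simpa [hm0, h1] using And.intro (hY1' i) hYB2
              · by_cases hend : t % (k - 1) + 1 < k - 1
                · have h1 : (t + 1) % (k - 1) = t % (k - 1) + 1 := by
                    rw [hadd, Nat.mod_eq_of_lt hend]
                  have := hm (i + 1 + t % (k - 1))
                  simpa [hm0, h1, Nat.add_assoc] using this
                · have heq : t % (k - 1) + 1 = k - 1 := by omega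
                  have h1 : (t + 1) % (k - 1) = 0 := by
                    rw [hadd, heq, Nat.mod_self]
                  have hcell := hm (i + 1 + t % (k - 1))
                  have hidx : i + 1 + t % (k - 1) + 1 = i + k := by omega
                  rw [hidx, pb i] at hcell
                  simpa [hm0, h1] using hcell
          · have hY2' : ∀ i, B (a i) (b (i + 2)) = false :=
              fun i => bool_false (not_exists.mp hY2 i)
            by_cases hXd : ∃ i, a (i + 1) ≠ b i
            · -- X both-0 and no loop : A-side corner swap
              obtain ⟨i, hXdne⟩ := hXd
              left
              exact master hA hB (a i) (b i) (a (i + 1)) (b (i + 1))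
                (hp i).1 (hp (i + 1)).1 (hm i).1 (hX1' i)
                hXdne
                (hp i).2 (hm i).2 (Or.inl (hp (i + 1)).2)
            · have hXd' : ∀ i, a (i + 1) = b i := by
                intro i
                by_contra hne
                exact hXd ⟨i, hne⟩
              by_cases hYd : ∃ i, a i ≠ b (i + 2)
              · -- Y both-0 and no loop : B-side corner swap
                obtain ⟨i, hYdne⟩ := hYd
                right
                obtain ⟨B', hsw, hre, hdd⟩ :=
                  master (A := B) (B := A) hB hA
                    (a (i + 1)) (b (i + 2)) (a i) (b (i + 1))
                    (hm (i + 1)).2 (hm i).2 (hp (i + 1)).2 (hY2' i)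
                    hYdne
                    (hm (i + 1)).1 (hp (i + 1)).1 (Or.inl (hm i).1)
                exact ⟨B', hsw, hre, by rw [Dd_comm A B', Dd_comm A B]; exact hdd⟩
              · -- all chords diagonal : the cycle is (up to period 3) a triangle
                have hYd' : ∀ i, a i = b (i + 2) := by
                  intro i
                  by_contra hne
                  exact hYd ⟨i, hne⟩
                left
                have hx0 : a 1 = b 0 := by simpa using hXd' 0
                have hx1 : a 2 = b 1 := by simpa using hXd' 1
                have hy0 : a 0 = b 2 := by simpa using hYd' 0
                have hy1 : a 1 = b 3 := by simpa using hYd' 1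
                have hp0 := hp 0; have hp1 := hp 1; have hp2 := hp 2
                have hm0a : A (a 0) (b 1) = false := by simpa using (hm 0).1
                have hm0b : B (a 0) (b 1) = true := by simpa using (hm 0).2
                have hm1a : A (a 1) (b 2) = false := by simpa using (hm 1).1
                have hm1b : B (a 1) (b 2) = true := by simpa using (hm 1).2
                have hm2a : A (a 2) (b 3) = false := by simpa using (hm 2).1
                have hm2b : B (a 2) (b 3) = true := by simpa using (hm 2).2
                refine master3 hA (a 0) (a 1) (a 2) ?_ ?_ ?_ ?_ ?_ ?_ ?_ ?_ ?_ ?_ ?_ ?_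
                · rw [hx0]; exact hp0.1
                · rw [hx1]; exact hp1.1
                · rw [hy0]; exact hp2.1
                · rw [hy0]; exact hm1a
                · rw [hy1]; exact hm2a
                · rw [hx1]; exact hm0a
                · rw [hx0]; exact hp0.2
                · rw [hx1]; exact hp1.2
                · rw [hy0]; exact hp2.2
                · rw [hy0]; exact hm1b
                · rw [hy1]; exact hm2b
                · rw [hx1]; exact hm0b


lemma find_other {α : Type*} [DecidableEq α] {s t : Finset α} (hcard : s.card = t.card)
    {y : α} (hy : y ∈ t) (hys : y ∉ s) : ∃ z, z ∈ s ∧ z ∉ t := by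
  by_contra h
  push_neg at h
  have hsub : s ⊆ t := h
  have hss : s ⊂ t := (Finset.ssubset_iff_of_subset hsub).2 ⟨y, hy, hys⟩
  have := Finset.card_lt_card hss
  omega

lemma row_step {A B : G n} {dp dm : Fin n → ℕ}
    (hA : Realizes A dp dm) (hB : Realizes B dp dm) {x y : Fin n}
    (h1 : A x y = true) (h2 : B x y = false) :
    ∃ y', A x y' = false ∧ B x y' = true := by
  have hc : (Finset.univ.filter (fun w => B x w = true)).card
      = (Finset.univ.filter (fun w => A x w = true)).card := by
    have hA' := (hA.2 x).1
    have hB' := (hB.2 x).1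
    unfold outDeg at hA' hB'
    omega
  have hy : y ∈ Finset.univ.filter (fun w => A x w = true) := by simp [h1]
  have hys : y ∉ Finset.univ.filter (fun w => B x w = true) := by simp [h2]
  obtain ⟨z, hz1, hz2⟩ := find_other hc hy hys
  simp only [Finset.mem_filter, Finset.mem_univ, true_and] at hz1 hz2
  exact ⟨z, bool_false hz2, hz1⟩

lemma col_step {A B : G n} {dp dm : Fin n → ℕ}
    (hA : Realizes A dp dm) (hB : Realizes B dp dm) {x y : Fin n}
    (h1 : A x y = false) (h2 : B x y = true) :
    ∃ x', A x' y = true ∧ B x' y = false := by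
  have hc : (Finset.univ.filter (fun w => A w y = true)).card
      = (Finset.univ.filter (fun w => B w y = true)).card := by
    have hA' := (hA.2 y).2
    have hB' := (hB.2 y).2
    unfold inDeg at hA' hB'
    omega
  have hy : x ∈ Finset.univ.filter (fun w => B w y = true) := by simp [h2]
  have hys : x ∉ Finset.univ.filter (fun w => A w y = true) := by simp [h1]
  obtain ⟨z, hz1, hz2⟩ := find_other hc hy hys
  simp only [Finset.mem_filter, Finset.mem_univ, true_and] at hz1 hz2
  exact ⟨z, hz1, bool_false hz2⟩

lemma exists_plus {A B : G n} {dp dm : Fin n → ℕ}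
    (hA : Realizes A dp dm) (hB : Realizes B dp dm) (hne : A ≠ B) :
    ∃ p : Fin n × Fin n, A p.1 p.2 = true ∧ B p.1 p.2 = false := by
  have hex : ∃ x y, A x y ≠ B x y := by
    by_contra h
    push_neg at h
    exact hne (funext fun x => funext fun y => h x y)
  obtain ⟨x, y, hxy⟩ := hex
  cases hA' : A x y <;> cases hB' : B x y
  · rw [hA', hB'] at hxy; exact absurd rfl hxy
  · obtain ⟨x', h⟩ := col_step hA hB hA' hB'
    exact ⟨(x', y), h⟩
  · exact ⟨(x, y), hA', hB'⟩
  · rw [hA', hB'] at hxy; exact absurd rfl hxy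

lemma exists_cycle {A B : G n} {dp dm : Fin n → ℕ}
    (hA : Realizes A dp dm) (hB : Realizes B dp dm) (hne : A ≠ B) :
    ∃ k a b, 2 ≤ k ∧ IsCyc A B k a b := by
  classical
  obtain ⟨p0, hp0⟩ := exists_plus hA hB hne
  have step : ∀ p : Fin n × Fin n, (A p.1 p.2 = true ∧ B p.1 p.2 = false) →
      ∃ q : Fin n × Fin n, (A q.1 q.2 = true ∧ B q.1 q.2 = false) ∧
        (A p.1 q.2 = false ∧ B p.1 q.2 = true) := by
    rintro ⟨x, y⟩ ⟨h1, h2⟩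
    obtain ⟨y', hy1, hy2⟩ := row_step hA hB h1 h2
    obtain ⟨x', hx1, hx2⟩ := col_step hA hB hy1 hy2
    exact ⟨(x', y'), ⟨hx1, hx2⟩, hy1, hy2⟩
  let W : ℕ → {p : Fin n × Fin n // A p.1 p.2 = true ∧ B p.1 p.2 = false} :=
    fun t => Nat.rec ⟨p0, hp0⟩
      (fun _ prev => ⟨(step prev.1 prev.2).choose, (step prev.1 prev.2).choose_spec.1⟩) t
  let r : ℕ → Fin n := fun t => (W t).1.1
  let c : ℕ → Fin n := fun t => (W t).1.2
  have hplus : ∀ t, A (r t) (c t) = true ∧ B (r t) (c t) = false := fun t => (W t).2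
  have hminus : ∀ t, A (r t) (c (t + 1)) = false ∧ B (r t) (c (t + 1)) = true :=
    fun t => (step (W t).1 (W t).2).choose_spec.2
  have hpig := Fintype.exists_ne_map_eq_of_card_lt (fun i : Fin (n + 1) => c i.val)
    (by simp)
  obtain ⟨s, t', hst, hceq⟩ := hpig
  obtain ⟨u, v, huv, hcuv⟩ : ∃ u v : ℕ, u < v ∧ c u = c v := by
    rcases lt_or_gt_of_ne hst with h | h
    · exact ⟨s.val, t'.val, h, hceq⟩
    · exact ⟨t'.val, s.val, h, hceq.symm⟩
  set k := v - u with hkdef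
  have hk1 : 1 ≤ k := by omega
  have hcu : c (u + k) = c u := by
    have huvk : u + k = v := by omega
    rw [huvk]
    exact hcuv.symm
  have hk2 : 2 ≤ k := by
    rcases eq_or_lt_of_le hk1 with h1 | h2
    · exfalso
      have hc1 : c (u + 1) = c u := by rw [← h1] at hcu; exact hcu
      have hmm := (hminus u).1
      rw [hc1, (hplus u).1] at hmm
      exact absurd hmm (by simp)
    · omega
  refine ⟨k, fun t => r (u + t % k), fun t => c (u + t % k), hk2,
    fun t => by simp only [Nat.add_mod_right],
    fun t => by simp only [Nat.add_mod_right],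
    fun t => hplus (u + t % k), ?_⟩
  intro t
  have hlt : t % k < k := Nat.mod_lt _ (by omega)
  have hadd : (t + 1) % k = (t % k + 1) % k := by
    rw [Nat.add_mod, Nat.mod_eq_of_lt (show 1 < k by omega)]
  by_cases hend : t % k + 1 < k
  · have h1 : (t + 1) % k = t % k + 1 := by rw [hadd, Nat.mod_eq_of_lt hend]
    have := hminus (u + t % k)
    simpa [h1, Nat.add_assoc] using this
  · have heq : t % k + 1 = k := by omega
    have h1 : (t + 1) % k = 0 := by rw [hadd, heq, Nat.mod_self]
    have hcell := hminus (u + t % k)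
    have hidx : u + t % k + 1 = u + k := by omega
    rw [hidx, hcu] at hcell
    simpa [h1] using hcell

lemma path_ex {dp dm : Fin n → ℕ} :
    ∀ d (A B : G n), Realizes A dp dm → Realizes B dp dm → Dd A B ≤ d →
    ∃ (m : ℕ) (f : Fin (m + 1) → G n),
      m ≤ Dd A B ∧ f 0 = A ∧ f (Fin.last m) = B ∧
      (∀ j, Realizes (f j) dp dm) ∧
      ∀ j : Fin m, Swap (f j.castSucc) (f j.succ) := by
  intro d
  induction d using Nat.strong_induction_on with
  | _ d ih =>
  intro A B hA hB hd
  by_cases hAB : A = B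
  · subst hAB
    exact ⟨0, fun _ => A, Nat.zero_le _, rfl, rfl, fun _ => hA, fun j => j.elim0⟩
  · obtain ⟨k, a, b, hk, hcyc⟩ := exists_cycle hA hB hAB
    rcases cyc_step hA hB k hk a b hcyc with ⟨A', hsw, hre, hdd⟩ | ⟨B', hsw, hre, hdd⟩
    · obtain ⟨m', f', hm', h0, hl, hreal, hswaps⟩ :=
        ih (Dd A' B) (by omega) A' B hre hB le_rfl
      refine ⟨m' + 1, Fin.cons A f', by omega, Fin.cons_zero _ _, ?_, ?_, ?_⟩
      · rw [← Fin.succ_last, Fin.cons_succ]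
        exact hl
      · intro j
        refine Fin.cases ?_ ?_ j
        · rw [Fin.cons_zero]; exact hA
        · intro i; rw [Fin.cons_succ]; exact hreal i
      · intro j
        refine Fin.cases ?_ ?_ j
        · simp only [Fin.castSucc_zero, Fin.cons_zero, Fin.succ_zero_eq_one]
          have h1 : (1 : Fin (m' + 2)) = Fin.succ 0 := rfl
          rw [h1, Fin.cons_succ, h0]
          exact hsw
        · intro i
          have hcs : (Fin.succ i).castSucc = Fin.succ i.castSucc := by
            rw [Fin.succ_castSucc]
          rw [hcs, Fin.cons_succ, Fin.cons_succ]
          exact hswaps i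
    · obtain ⟨m', f', hm', h0, hl, hreal, hswaps⟩ :=
        ih (Dd A B') (by omega) A B' hA hre le_rfl
      refine ⟨m' + 1, Fin.snoc f' B, by omega, ?_, Fin.snoc_last _ _, ?_, ?_⟩
      · have hz : (0 : Fin (m' + 2)) = Fin.castSucc 0 := rfl
        rw [hz, Fin.snoc_castSucc]
        exact h0
      · intro j
        refine Fin.lastCases ?_ ?_ j
        · rw [Fin.snoc_last]; exact hB
        · intro i; rw [Fin.snoc_castSucc]; exact hreal i
      · intro j
        refine Fin.lastCases ?_ ?_ j
        · rw [Fin.succ_last, Fin.snoc_last, Fin.snoc_castSucc, hl]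
          exact swap_symm hsw
        · intro i
          rw [Fin.succ_castSucc, Fin.snoc_castSucc, Fin.snoc_castSucc]
          exact hswaps i

lemma card_true_eq (E : G n) {dp dm : Fin n → ℕ} (hE : Realizes E dp dm) :
    (Finset.univ.filter (fun p : Fin n × Fin n => E p.1 p.2 = true)).card = ∑ v, dp v := by
  rw [Finset.card_eq_sum_card_fiberwise
    (f := Prod.fst) (t := Finset.univ) (fun p _ => Finset.mem_univ _)]
  refine Finset.sum_congr rfl ?_
  intro v _
  rw [← (hE.2 v).1]
  unfold outDeg
  refine Finset.card_bij (fun p _ => p.2) ?_ ?_ ?_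
  · rintro ⟨x, y⟩ hp
    simp only [Finset.mem_filter, Finset.mem_univ, true_and] at hp ⊢
    obtain ⟨hp1, hp2⟩ := hp
    rw [← hp2]
    exact hp1
  · rintro ⟨x, y⟩ hx ⟨x', y'⟩ hx' h
    simp only [Finset.mem_filter, Finset.mem_univ, true_and] at hx hx'
    simp only at h
    exact Prod.ext (by rw [hx.2, hx'.2]) h
  · intro w hw
    simp only [Finset.mem_filter, Finset.mem_univ, true_and] at hw
    exact ⟨(v, w), by simp [hw], rfl⟩



lemma Dd_le_two_e {A B : G n} {dp dm : Fin n → ℕ}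
    (hA : Realizes A dp dm) (hB : Realizes B dp dm) :
    Dd A B ≤ 2 * ∑ v, dp v := by
  have hsub : mism A B ⊆
      (Finset.univ.filter (fun p : Fin n × Fin n => A p.1 p.2 = true)) ∪
      (Finset.univ.filter (fun p : Fin n × Fin n => B p.1 p.2 = true)) := by
    intro p hp
    rw [mem_mism] at hp
    simp only [Finset.mem_union, Finset.mem_filter, Finset.mem_univ, true_and]
    cases hA' : A p.1 p.2 <;> cases hB' : B p.1 p.2 <;> simp_all
  have h1 := Finset.card_le_card hsub
  have h2 := Finset.card_union_le
    (Finset.univ.filter (fun p : Fin n × Fin n => A p.1 p.2 = true))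
    (Finset.univ.filter (fun p : Fin n × Fin n => B p.1 p.2 = true))
  rw [card_true_eq A hA, card_true_eq B hB] at h2
  unfold Dd at *
  omega

end SwapProof

/-- Any two realizations of the same bi-degree sequence with `e` edges in
total are connected by at most `2e` two-edge or three-edge swaps, all
intermediate digraphs realizing the same bi-degree sequence. -/
theorem swap_connected_bounded (n : ℕ) (dp dm : Fin n → ℕ)
    (E₁ E₂ : Fin n → Fin n → Bool)
    (h₁ : Realizes E₁ dp dm) (h₂ : Realizes E₂ dp dm) :
    ∃ (m : ℕ) (f : Fin (m + 1) → (Fin n → Fin n → Bool)),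
      m ≤ 2 * ∑ v, dp v ∧
      f 0 = E₁ ∧ f (Fin.last m) = E₂ ∧
      (∀ j, Realizes (f j) dp dm) ∧
      ∀ j : Fin m, Swap (f j.castSucc) (f j.succ) := by
  obtain ⟨m, f, hm, h0, hl, hre, hsw⟩ :=
    SwapProof.path_ex (SwapProof.Dd E₁ E₂) E₁ E₂ h₁ h₂ le_rfl
  exact ⟨m, f, le_trans hm (SwapProof.Dd_le_two_e h₁ h₂), h0, hl, hre, hsw⟩
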